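/- Let d ≥ 2 be an integer. For p ∈ (0,1) and n a positive integer, define Q(p,n) = (1 − (1−p)^n)^(n^(d−1)). If β > d−1 and n(p) = ⌊(−β·ln p)/p⌋, then Q(p, n(p)) → 1 as p → 0⁺; if 0 < β ≤ d−1, then Q(p, n(p)) → 0 as p → 0⁺. -/

import Mathlib

open Filter Real

lemma aux_pow_le_exp {p : ℝ} (hp1 : p ≤ 1) (n : ℕ) :
    (1 - p) ^ n ≤ Real.exp (-(n * p)) := by
  calc (1 - p) ^ n ≤ (Real.exp (-p)) ^ n := by
        apply pow_le_pow_left₀ (by linarith)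
        linarith [Real.add_one_le_exp (-p)]
    _ = Real.exp (n * (-p)) := (Real.exp_nat_mul _ n).symm
    _ = Real.exp (-(n * p)) := by ring_nf

lemma aux_exp_le_pow {p : ℝ} (hp0 : 0 < p) (hp1 : p < 1) (n : ℕ) :
    Real.exp (-(n * p) / (1 - p)) ≤ (1 - p) ^ n := by
  have h1 : 0 < 1 - p := by linarith
  have key : Real.exp (-(p / (1 - p))) ≤ 1 - p := by
    have hE := Real.exp_pos (p / (1 - p))
    have h2 : 1 ≤ (1 - p) * Real.exp (p / (1 - p)) := by
      have h3 := Real.add_one_le_exp (p / (1 - p))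
      have h4 : (1 - p) * (p / (1 - p) + 1) = 1 := by field_simp; ring
      nlinarith
    rw [Real.exp_neg]
    have := mul_inv_cancel₀ (ne_of_gt hE)
    nlinarith [inv_pos.mpr hE]
  calc Real.exp (-(n * p) / (1 - p)) = (Real.exp (-(p / (1 - p)))) ^ n := by
        rw [← Real.exp_nat_mul]; congr 1; field_simp
    _ ≤ (1 - p) ^ n := pow_le_pow_left₀ (Real.exp_pos _).le key n

lemma aux_part1 (d : ℕ) (hd : 2 ≤ d) (β : ℝ) (hβ : (d:ℝ) - 1 < β) :
    Tendsto (fun p : ℝ => (1 - (1 - p) ^ (⌊(-β * Real.log p) / p⌋₊)) ^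
      ((⌊(-β * Real.log p) / p⌋₊) ^ (d-1)))
      (nhdsWithin 0 (Set.Ioi 0)) (nhds 1) := by
  have hd2 : (2:ℝ) ≤ (d:ℝ) := by exact_mod_cast hd
  have hβ0 : 0 < β := by linarith
  have hcast : ((d-1 : ℕ) : ℝ) = (d:ℝ) - 1 := by
    rw [Nat.cast_sub (by omega)]; norm_num
  have hdm1 : (0:ℝ) < (d:ℝ) - 1 := by linarith
  set ε : ℝ := β - ((d:ℝ) - 1) with hε
  have hε0 : 0 < ε := by rw [hε]; linarith
  set δ : ℝ := ε / ((d:ℝ) - 1) with hδ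
  have hδ0 : 0 < δ := div_pos hε0 hdm1
  set n : ℝ → ℕ := fun p => ⌊(-β * Real.log p) / p⌋₊ with hn
  set F : ℝ → ℝ := fun p => ((n p : ℝ)) ^ (d-1) * (p ^ β * Real.exp p) with hF
  set G : ℝ → ℝ := fun p => β ^ (d-1) * ((-Real.log p) * p ^ δ) ^ (d-1) * Real.exp p with hG
  have hmem : Set.Ioo (0:ℝ) 1 ∈ nhdsWithin (0:ℝ) (Set.Ioi 0) :=
    Ioo_mem_nhdsGT_of_mem ⟨le_refl _, one_pos⟩
  -- G → 0
  have hGlim : Tendsto G (nhdsWithin 0 (Set.Ioi 0)) (nhds 0) := by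
    rw [hG]
    have hI : Tendsto (fun p : ℝ => (-Real.log p) * p ^ δ) (nhdsWithin 0 (Set.Ioi 0)) (nhds 0) := by
      have := (tendsto_log_mul_rpow_nhdsGT_zero hδ0).neg
      simpa [neg_mul] using this
    have hIp : Tendsto (fun p : ℝ => ((-Real.log p) * p ^ δ) ^ (d-1))
        (nhdsWithin 0 (Set.Ioi 0)) (nhds 0) := by
      have := hI.pow (d-1)
      simpa [zero_pow (by omega : d - 1 ≠ 0)] using this
    have hexp : Tendsto (fun p : ℝ => Real.exp p) (nhdsWithin 0 (Set.Ioi 0)) (nhds 1) := by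
      simpa using (Real.continuous_exp.tendsto 0).mono_left nhdsWithin_le_nhds
    have := (tendsto_const_nhds (x := β ^ (d-1))
      (f := nhdsWithin (0:ℝ) (Set.Ioi 0))).mul hIp |>.mul hexp
    simpa using this
  -- eventually F ≤ G
  have hFG : ∀ᶠ p in nhdsWithin (0:ℝ) (Set.Ioi 0), F p ≤ G p := by
    filter_upwards [hmem] with p hp
    obtain ⟨hp0, hp1⟩ := hp
    have hM : 0 ≤ -Real.log p := by
      have := Real.log_nonpos hp0.le hp1.le; linarith
    have hq : (0:ℝ) ≤ (-β * Real.log p) / p := by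
      apply div_nonneg _ hp0.le; nlinarith
    have hfloor : (n p : ℝ) ≤ β * (-Real.log p) / p := by
      have h := Nat.floor_le hq
      rw [hn]
      calc ((⌊(-β * Real.log p) / p⌋₊ : ℕ) : ℝ) ≤ (-β * Real.log p) / p := h
        _ = β * (-Real.log p) / p := by ring
    have hpos : (0:ℝ) ≤ p ^ β * Real.exp p := by positivity
    have step1 : F p ≤ (β * (-Real.log p) / p) ^ (d-1) * (p ^ β * Real.exp p) := by
      rw [hF]
      apply mul_le_mul_of_nonneg_right _ hpos
      exact pow_le_pow_left₀ (Nat.cast_nonneg _) hfloor _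
    have key1 : (p ^ δ) ^ (d-1) = p ^ ε := by
      rw [← Real.rpow_natCast (p ^ δ) (d-1), ← Real.rpow_mul hp0.le, hcast]
      congr 1
      rw [hδ, div_mul_cancel₀ _ hdm1.ne']
    have key2 : p ^ β = p ^ ε * p ^ (d-1) := by
      rw [← Real.rpow_natCast p (d-1), hcast, ← Real.rpow_add hp0]
      congr 1; rw [hε]; ring
    have heq : (β * (-Real.log p) / p) ^ (d-1) * (p ^ β * Real.exp p) =
        β ^ (d-1) * ((-Real.log p) * p ^ δ) ^ (d-1) * Real.exp p := by
      rw [key2, div_pow, mul_pow β (-Real.log p), mul_pow (-Real.log p) (p ^ δ), key1]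
      have hppow : (0:ℝ) < p ^ (d-1) := pow_pos hp0 _
      field_simp
    rw [hG]
    calc F p ≤ (β * (-Real.log p) / p) ^ (d-1) * (p ^ β * Real.exp p) := step1
      _ = β ^ (d-1) * ((-Real.log p) * p ^ δ) ^ (d-1) * Real.exp p := heq
  have hFpos : ∀ᶠ p in nhdsWithin (0:ℝ) (Set.Ioi 0), 0 ≤ F p := by
    filter_upwards [hmem] with p hp
    have hp0 := hp.1
    rw [hF]; positivity
  have hT : Tendsto F (nhdsWithin 0 (Set.Ioi 0)) (nhds 0) :=
    tendsto_of_tendsto_of_tendsto_of_le_of_le' tendsto_const_nhds hGlim hFpos hFG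
  -- squeeze the main quantity
  apply tendsto_of_tendsto_of_tendsto_of_le_of_le' (g := fun p => 1 - F p) (h := fun _ => 1)
  · simpa using tendsto_const_nhds.sub hT
  · exact tendsto_const_nhds
  · -- 1 - F p ≤ Q p
    filter_upwards [hmem] with p hp
    obtain ⟨hp0, hp1⟩ := hp
    set y : ℝ := (1 - p) ^ (n p) with hy
    have hy0 : 0 ≤ y := pow_nonneg (by linarith) _
    have hy1 : y ≤ 1 := pow_le_one₀ (by linarith) (by linarith)
    have bern : 1 - (((n p) ^ (d-1) : ℕ) : ℝ) * y ≤ (1 - y) ^ ((n p) ^ (d-1)) := by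
      have h := one_add_mul_le_pow (a := -y) (by linarith) ((n p) ^ (d-1))
      calc 1 - (((n p) ^ (d-1) : ℕ) : ℝ) * y = 1 + ((n p) ^ (d-1) : ℕ) * (-y) := by ring
        _ ≤ (1 + -y) ^ ((n p) ^ (d-1)) := h
        _ = (1 - y) ^ ((n p) ^ (d-1)) := by ring_nf
    have hyb : y ≤ p ^ β * Real.exp p := by
      have h1 : y ≤ Real.exp (-((n p) * p)) := aux_pow_le_exp hp1.le _
      have h2 : Real.exp (-((n p) * p)) ≤ p ^ β * Real.exp p := by
        have hfl : (-β * Real.log p) / p - 1 < ((n p : ℕ) : ℝ) := by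
          rw [hn]; exact Nat.sub_one_lt_floor _
        have h3 : -β * Real.log p - p < (n p : ℝ) * p := by
          have := (div_lt_iff₀ hp0).mp
            (show (-β * Real.log p) / p < (n p : ℝ) + 1 by linarith)
          nlinarith
        have h4 : Real.exp (-((n p) * p)) ≤ Real.exp (Real.log p * β + p) :=
          Real.exp_le_exp.mpr (by nlinarith)
        rw [Real.exp_add, ← Real.rpow_def_of_pos hp0] at h4
        exact h4
      linarith
    have hmono : (((n p) ^ (d-1) : ℕ) : ℝ) * y ≤ F p := by
      rw [hF]
      push_cast
      exact mul_le_mul_of_nonneg_left hyb (by positivity)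
    calc 1 - F p ≤ 1 - (((n p) ^ (d-1) : ℕ) : ℝ) * y := by linarith
      _ ≤ (1 - y) ^ ((n p) ^ (d-1)) := bern
  · filter_upwards [hmem] with p hp
    obtain ⟨hp0, hp1⟩ := hp
    apply pow_le_one₀
    · have : (1 - p) ^ (⌊(-β * Real.log p) / p⌋₊) ≤ 1 := pow_le_one₀ (by linarith) (by linarith)
      linarith
    · have : 0 ≤ (1 - p) ^ (⌊(-β * Real.log p) / p⌋₊) := pow_nonneg (by linarith) _
      linarith

lemma aux_part2 (d : ℕ) (hd : 2 ≤ d) (β : ℝ) (hβ0 : 0 < β) (hβ : β ≤ (d:ℝ) - 1) :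
    Tendsto (fun p : ℝ => (1 - (1 - p) ^ (⌊(-β * Real.log p) / p⌋₊)) ^
      ((⌊(-β * Real.log p) / p⌋₊) ^ (d-1)))
      (nhdsWithin 0 (Set.Ioi 0)) (nhds 0) := by
  have hd2 : (2:ℝ) ≤ (d:ℝ) := by exact_mod_cast hd
  have hcast : ((d-1 : ℕ) : ℝ) = (d:ℝ) - 1 := by
    rw [Nat.cast_sub (by omega)]; norm_num
  set n : ℝ → ℕ := fun p => ⌊(-β * Real.log p) / p⌋₊ with hn
  set X : ℝ → ℝ := fun p => ((n p : ℝ)) ^ (d-1) * (1 - p) ^ (n p) with hX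
  set C : ℝ := (β/2) ^ (d-1) * (1/2) with hC
  have hC0 : 0 < C := by positivity
  have hMtop : Tendsto (fun p : ℝ => -Real.log p) (nhdsWithin 0 (Set.Ioi 0)) atTop := by
    exact tendsto_neg_atBot_atTop.comp Real.tendsto_log_nhdsGT_zero
  have hMp : Tendsto (fun p : ℝ => (-Real.log p) * p) (nhdsWithin 0 (Set.Ioi 0)) (nhds 0) := by
    have := (tendsto_log_mul_rpow_nhdsGT_zero one_pos).neg
    simpa [neg_mul] using this
  have hden : Tendsto (fun p : ℝ => 1 - p) (nhdsWithin 0 (Set.Ioi 0)) (nhds 1) := by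
    have h : Tendsto (fun p : ℝ => 1 - p) (nhds 0) (nhds 1) := by
      simpa using (tendsto_const_nhds (x := (1:ℝ)) (f := nhds (0:ℝ))).sub tendsto_id
    exact h.mono_left nhdsWithin_le_nhds
  have htend : Tendsto (fun p : ℝ => β * ((-Real.log p) * p) / (1 - p))
      (nhdsWithin 0 (Set.Ioi 0)) (nhds 0) := by
    have := ((tendsto_const_nhds (x := β)).mul hMp).div hden one_ne_zero
    simpa [Pi.div_def] using this
  have hev2 : ∀ᶠ p in nhdsWithin (0:ℝ) (Set.Ioi 0),
      β * ((-Real.log p) * p) / (1 - p) < Real.log 2 :=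
    htend.eventually (gt_mem_nhds (Real.log_pos one_lt_two))
  have hevM : ∀ᶠ p in nhdsWithin (0:ℝ) (Set.Ioi 0), 1 ≤ -Real.log p :=
    hMtop.eventually (eventually_ge_atTop 1)
  have hmem : Set.Ioo (0:ℝ) (min (1/2) (β/2)) ∈ nhdsWithin (0:ℝ) (Set.Ioi 0) :=
    Ioo_mem_nhdsGT_of_mem ⟨le_refl _, by positivity⟩
  -- X → atTop
  have hXtop : Tendsto X (nhdsWithin 0 (Set.Ioi 0)) atTop := by
    have hpowC : Tendsto (fun p : ℝ => C * (-Real.log p) ^ (d-1))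
        (nhdsWithin 0 (Set.Ioi 0)) atTop := by
      have hpow : Tendsto (fun p : ℝ => (-Real.log p) ^ (d-1))
          (nhdsWithin 0 (Set.Ioi 0)) atTop := by
        have := (tendsto_pow_atTop (by omega : d-1 ≠ 0)).comp hMtop
        simpa [Function.comp_def] using this
      exact hpow.const_mul_atTop hC0
    apply tendsto_atTop_mono' _ _ hpowC
    filter_upwards [hmem, hev2, hevM] with p hp h2 hM1
    obtain ⟨hp0, hpc⟩ := hp
    have hp12 : p < 1/2 := lt_of_lt_of_le hpc (min_le_left _ _)
    have hpβ : p < β/2 := lt_of_lt_of_le hpc (min_le_right _ _)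
    have hp1 : p < 1 := by linarith
    set M : ℝ := -Real.log p with hMdef
    have hM0 : 0 < M := by linarith
    have hq : (0:ℝ) ≤ (-β * Real.log p) / p := by
      apply div_nonneg _ hp0.le; nlinarith
    have f1 : (n p : ℝ) ≤ β * M / p := by
      have h := Nat.floor_le hq
      rw [hn]
      calc ((⌊(-β * Real.log p) / p⌋₊ : ℕ) : ℝ) ≤ (-β * Real.log p) / p := h
        _ = β * M / p := by rw [hMdef]; ring
    have f3 : (n p : ℝ) * p ≤ β * M := by
      have h := mul_le_mul_of_nonneg_right f1 hp0.le
      rwa [div_mul_cancel₀ _ (ne_of_gt hp0)] at h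
    have hbm : 2 * p ≤ β * M := by nlinarith
    have hone : 1 ≤ β * M / (2 * p) := by
      rw [le_div_iff₀ (by linarith : (0:ℝ) < 2 * p)]; linarith
    have f2 : β * M / (2 * p) ≤ (n p : ℝ) := by
      have hfl : (-β * Real.log p) / p - 1 < ((n p : ℕ) : ℝ) := by
        rw [hn]; exact Nat.sub_one_lt_floor _
      have heqq : (-β * Real.log p) / p = 2 * (β * M / (2 * p)) := by
        rw [hMdef]
        field_simp
      nlinarith [hfl, hone]
    -- lower bound for (1-p)^(n p)
    have f4 : Real.exp (-((n p) * p) / (1 - p)) ≤ (1 - p) ^ (n p) :=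
      aux_exp_le_pow hp0 hp1 (n p)
    have f5 : Real.exp (-(β * M) / (1 - p)) ≤ Real.exp (-((n p) * p) / (1 - p)) := by
      apply Real.exp_le_exp.mpr
      gcongr
      all_goals linarith
    have f6 : -(β * M) / (1 - p) = Real.log p * β + -(β * ((-Real.log p) * p) / (1 - p)) := by
      have h1p : (1:ℝ) - p ≠ 0 := by linarith
      rw [hMdef]
      field_simp
      ring
    have f7 : Real.exp (-(β * M) / (1 - p)) =
        p ^ β * Real.exp (-(β * ((-Real.log p) * p) / (1 - p))) := by
      rw [f6, Real.exp_add, ← Real.rpow_def_of_pos hp0]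
    have f8 : (1/2 : ℝ) ≤ Real.exp (-(β * ((-Real.log p) * p) / (1 - p))) := by
      have : Real.exp (-Real.log 2) ≤ Real.exp (-(β * ((-Real.log p) * p) / (1 - p))) :=
        Real.exp_le_exp.mpr (by linarith)
      rwa [Real.exp_neg, Real.exp_log two_pos, show ((2:ℝ))⁻¹ = 1/2 by norm_num] at this
    have hy : p ^ β * (1/2) ≤ (1 - p) ^ (n p) := by
      have h1 : p ^ β * (1/2) ≤ p ^ β * Real.exp (-(β * ((-Real.log p) * p) / (1 - p))) := by
        apply mul_le_mul_of_nonneg_left f8 (Real.rpow_nonneg hp0.le β)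
      calc p ^ β * (1/2) ≤ p ^ β * Real.exp (-(β * ((-Real.log p) * p) / (1 - p))) := h1
        _ = Real.exp (-(β * M) / (1 - p)) := f7.symm
        _ ≤ Real.exp (-((n p) * p) / (1 - p)) := f5
        _ ≤ (1 - p) ^ (n p) := f4
    have hpd : p ^ ((d-1 : ℕ)) ≤ p ^ β := by
      have h := Real.rpow_le_rpow_of_exponent_ge hp0 hp1.le hβ
      rwa [← Real.rpow_natCast p (d-1), hcast]
    -- chain
    have hnn : (0:ℝ) ≤ β * M / (2 * p) := by positivity
    have hbase : β * M / (2 * p) * p = β / 2 * M := by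
      field_simp
    have hrp : (0:ℝ) ≤ p ^ β := Real.rpow_nonneg hp0.le β
    calc C * M ^ (d-1) = ((β / 2) * M) ^ (d-1) * (1/2) := by
          rw [hC, mul_pow]; ring
      _ = (β * M / (2 * p) * p) ^ (d-1) * (1/2) := by rw [hbase]
      _ = (β * M / (2 * p)) ^ (d-1) * p ^ (d-1) * (1/2) := by rw [mul_pow]
      _ ≤ (β * M / (2 * p)) ^ (d-1) * p ^ β * (1/2) := by
          apply mul_le_mul_of_nonneg_right _ (by norm_num : (0:ℝ) ≤ 1/2)
          exact mul_le_mul_of_nonneg_left hpd (pow_nonneg hnn (d-1))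
      _ ≤ ((n p : ℝ)) ^ (d-1) * p ^ β * (1/2) := by
          apply mul_le_mul_of_nonneg_right _ (by norm_num : (0:ℝ) ≤ 1/2)
          exact mul_le_mul_of_nonneg_right (pow_le_pow_left₀ hnn f2 (d-1)) hrp
      _ = ((n p : ℝ)) ^ (d-1) * (p ^ β * (1/2)) := by ring
      _ ≤ ((n p : ℝ)) ^ (d-1) * (1 - p) ^ (n p) := by
          apply mul_le_mul_of_nonneg_left hy (by positivity)
      _ = X p := by rw [hX]
  -- exp(-X) → 0
  have hexplim : Tendsto (fun p => Real.exp (-(X p))) (nhdsWithin 0 (Set.Ioi 0)) (nhds 0) := by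
    exact Real.tendsto_exp_atBot.comp (tendsto_neg_atTop_atBot.comp hXtop)
  have hmem1 : Set.Ioo (0:ℝ) 1 ∈ nhdsWithin (0:ℝ) (Set.Ioi 0) :=
    Ioo_mem_nhdsGT_of_mem ⟨le_refl _, one_pos⟩
  apply tendsto_of_tendsto_of_tendsto_of_le_of_le' (g := fun _ => (0:ℝ))
    (h := fun p => Real.exp (-(X p))) tendsto_const_nhds hexplim
  · filter_upwards [hmem1] with p hp
    obtain ⟨hp0, hp1⟩ := hp
    apply pow_nonneg
    have : (1 - p) ^ (⌊(-β * Real.log p) / p⌋₊) ≤ 1 := pow_le_one₀ (by linarith) (by linarith)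
    linarith
  · filter_upwards [hmem1] with p hp
    obtain ⟨hp0, hp1⟩ := hp
    set y : ℝ := (1 - p) ^ (n p) with hy
    have hy0 : 0 ≤ y := pow_nonneg (by linarith) _
    have hy1 : y ≤ 1 := pow_le_one₀ (by linarith) (by linarith)
    have step : (1 - y) ^ ((n p) ^ (d-1)) ≤ (Real.exp (-y)) ^ ((n p) ^ (d-1)) := by
      apply pow_le_pow_left₀ (by linarith)
      linarith [Real.add_one_le_exp (-y)]
    have step2 : (Real.exp (-y)) ^ ((n p) ^ (d-1)) = Real.exp (-(X p)) := by
      rw [← Real.exp_nat_mul, hX]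
      congr 1
      push_cast
      ring
    calc (1 - (1 - p) ^ (⌊(-β * Real.log p) / p⌋₊)) ^ ((⌊(-β * Real.log p) / p⌋₊) ^ (d-1))
        = (1 - y) ^ ((n p) ^ (d-1)) := by rw [hy, hn]
      _ ≤ (Real.exp (-y)) ^ ((n p) ^ (d-1)) := step
      _ = Real.exp (-(X p)) := step2

/-- Threshold for the event that every line of the box contains an occupied site:
with `Q(p,n) = (1-(1-p)^n)^(n^(d-1))` and `n(p) = ⌊-β ln p / p⌋`,
`Q(p,n(p)) → 1` as `p → 0⁺` if `β > d-1`, and `→ 0` if `0 < β ≤ d-1`. -/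
theorem stmt_1 (d : ℕ) (hd : 2 ≤ d) (β : ℝ)
    (Q : ℝ → ℕ → ℝ) (hQ : ∀ p n, Q p n = (1 - (1 - p) ^ n) ^ (n ^ (d - 1)))
    (np : ℝ → ℕ) (hnp : ∀ p, np p = ⌊(-β * Real.log p) / p⌋₊) :
    ((d : ℝ) - 1 < β →
      Tendsto (fun p => Q p (np p)) (nhdsWithin 0 (Set.Ioi 0)) (nhds 1)) ∧
    (0 < β → β ≤ (d : ℝ) - 1 →
      Tendsto (fun p => Q p (np p)) (nhdsWithin 0 (Set.Ioi 0)) (nhds 0)) := by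
  have hfun : (fun p => Q p (np p)) = fun p : ℝ =>
      (1 - (1 - p) ^ (⌊(-β * Real.log p) / p⌋₊)) ^ ((⌊(-β * Real.log p) / p⌋₊) ^ (d-1)) := by
    funext p
    rw [hQ, hnp]
  constructor
  · intro h
    rw [hfun]
    exact aux_part1 d hd β h
  · intro h0 h1
    rw [hfun]
    exact aux_part2 d hd β h0 h1
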